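/- arXiv:1501.05477 — 4 statements merged into one kernel-verified Lean document; each statement's English description precedes it below -/
import Mathlib

section
/- Let f : (ZMod 2)^{2m} → ZMod 2 be defined by decomposition into four functions on (ZMod 2)^{2m-2}: f(00⊙i) = f₀(i), f(01⊙i) = f₁(i), f(10⊙i) = f₂(i), f(11⊙i) = f₃(i), where ⊙ denotes prepending two bits. If f₀, f₁, f₂, f₃ are all bent and their duals satisfy f̃₀ + f̃₁ + f̃₂ + f̃₃ = 1 identically, then f is bent. -/
/-- Standard dot product on `(ZMod 2)^n`. -/
def dotp (n : ℕ) (a x : Fin n → ZMod 2) : ZMod 2 := ∑ j, a j * x j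

/-- Walsh–Hadamard transform of a Boolean function. -/
def walsh (n : ℕ) (f : (Fin n → ZMod 2) → ZMod 2) (a : Fin n → ZMod 2) : ℤ :=
  ∑ x : Fin n → ZMod 2, (-1 : ℤ) ^ (f x + dotp n a x).val

/-- A Boolean function on `(ZMod 2)^{2m}` is bent if its Walsh–Hadamard transform has
constant magnitude `2^m`. -/
def IsBent (m : ℕ) (f : (Fin (2 * m) → ZMod 2) → ZMod 2) : Prop :=
  ∀ a, |walsh (2 * m) f a| = 2 ^ m

/-- `g` is the dual of the bent function `f`. -/
def IsDualOf (m : ℕ) (g f : (Fin (2 * m) → ZMod 2) → ZMod 2) : Prop :=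
  ∀ a, walsh (2 * m) f a = 2 ^ m * (-1 : ℤ) ^ (g a).val

/-- Prepend a pair of bits to a bit string. -/
def prepend2 (n : ℕ) (b₁ b₂ : ZMod 2) (i : Fin n → ZMod 2) : Fin (n + 2) → ZMod 2 :=
  Fin.cons b₁ (Fin.cons b₂ i)

lemma sum_cons (n : ℕ) (g : (Fin (n+1) → ZMod 2) → ℤ) :
    ∑ x : Fin (n+1) → ZMod 2, g x = ∑ b : ZMod 2, ∑ y : Fin n → ZMod 2, g (Fin.cons b y) := by
  rw [show (∑ b : ZMod 2, ∑ y : Fin n → ZMod 2, g (Fin.cons b y))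
      = ∑ p : ZMod 2 × (Fin n → ZMod 2), g (Fin.cons p.1 p.2) from
        (Fintype.sum_prod_type (f := fun p => g (Fin.cons p.1 p.2))).symm]
  exact (Fintype.sum_equiv (Fin.consEquiv (fun _ => ZMod 2))
    (fun p => g (Fin.cons p.1 p.2)) g (fun p => rfl)).symm

lemma sum_zmod2 (g : ZMod 2 → ℤ) : ∑ b : ZMod 2, g b = g 0 + g 1 := Fin.sum_univ_two g

lemma neg_one_pow_add (u v : ZMod 2) :
    ((-1:ℤ)) ^ (u+v).val = ((-1:ℤ))^u.val * ((-1:ℤ))^v.val := by revert u v; decide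

lemma key (a0 a1 e0 e1 e2 e3 : ZMod 2) (h : e0+e1+e2+e3 = 1) :
    |((-1:ℤ))^(a0*0+a1*0).val * ((-1:ℤ))^e0.val + ((-1:ℤ))^(a0*0+a1*1).val * ((-1:ℤ))^e1.val +
      ((-1:ℤ))^(a0*1+a1*0).val * ((-1:ℤ))^e2.val + ((-1:ℤ))^(a0*1+a1*1).val * ((-1:ℤ))^e3.val|
      = 2 := by
  revert h; revert a0 a1 e0 e1 e2 e3; decide

lemma dotp_prepend2 (n : ℕ) (a0 a1 b0 b1 : ZMod 2) (a x : Fin n → ZMod 2) :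
    dotp (n+2) (prepend2 n a0 a1 a) (prepend2 n b0 b1 x)
      = (a0*b0 + a1*b1) + dotp n a x := by
  simp [dotp, prepend2, Fin.sum_univ_succ, add_assoc]

lemma walshInner_aux (m : ℕ) (g : (Fin (2*m) → ZMod 2) → ZMod 2) (c : ZMod 2)
    (a' : Fin (2*m) → ZMod 2) :
    ∑ x : Fin (2*m) → ZMod 2, ((-1:ℤ))^(g x + (c + dotp (2*m) a' x)).val
      = ((-1:ℤ))^c.val * walsh (2*m) g a' := by
  rw [walsh, Finset.mul_sum]
  refine Finset.sum_congr rfl fun x _ => ?_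
  have h : g x + (c + dotp (2*m) a' x) = c + (g x + dotp (2*m) a' x) := by ring
  rw [h, neg_one_pow_add]

/-- Tokareva's criterion: if a Boolean function on `(ZMod 2)^{2m+2}` decomposes into four
bent functions on `(ZMod 2)^{2m}` whose duals sum to the constant `1`, then it is bent. -/
theorem bent_of_four_bent_decomposition (m : ℕ)
    (f : (Fin (2 * (m + 1)) → ZMod 2) → ZMod 2)
    (f₀ f₁ f₂ f₃ d₀ d₁ d₂ d₃ : (Fin (2 * m) → ZMod 2) → ZMod 2)
    (hf₀ : ∀ i, f (prepend2 (2 * m) 0 0 i) = f₀ i)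
    (hf₁ : ∀ i, f (prepend2 (2 * m) 0 1 i) = f₁ i)
    (hf₂ : ∀ i, f (prepend2 (2 * m) 1 0 i) = f₂ i)
    (hf₃ : ∀ i, f (prepend2 (2 * m) 1 1 i) = f₃ i)
    (hb₀ : IsBent m f₀) (hb₁ : IsBent m f₁) (hb₂ : IsBent m f₂) (hb₃ : IsBent m f₃)
    (hd₀ : IsDualOf m d₀ f₀) (hd₁ : IsDualOf m d₁ f₁)
    (hd₂ : IsDualOf m d₂ f₂) (hd₃ : IsDualOf m d₃ f₃)
    (hsum : ∀ i, d₀ i + d₁ i + d₂ i + d₃ i = 1) :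
    IsBent (m + 1) f := by
  intro a
  set a' : Fin (2*m) → ZMod 2 := Fin.tail (Fin.tail a) with ha'
  have ha : prepend2 (2*m) (a 0) (a 1) a' = a := by
    unfold prepend2
    rw [ha', show a 1 = Fin.tail a 0 from rfl, Fin.cons_self_tail, Fin.cons_self_tail]
  have hdot : ∀ b0 b1 (x : Fin (2*m) → ZMod 2),
      dotp (2*m+2) a (prepend2 (2*m) b0 b1 x)
        = ((a 0)*b0 + (a 1)*b1) + dotp (2*m) a' x := by
    intro b0 b1 x
    conv_lhs => rw [← ha]
    exact dotp_prepend2 (2*m) (a 0) (a 1) b0 b1 a' x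
  have e1 : walsh (2*(m+1)) f a
      = ∑ b0 : ZMod 2, ∑ b1 : ZMod 2, ∑ x : Fin (2*m) → ZMod 2,
          ((-1:ℤ))^(f (prepend2 (2*m) b0 b1 x)
            + (((a 0)*b0 + (a 1)*b1) + dotp (2*m) a' x)).val := by
    rw [show walsh (2*(m+1)) f a
        = ∑ x : Fin (2*m+1+1) → ZMod 2, ((-1:ℤ))^(f x + dotp (2*m+2) a x).val from rfl,
      sum_cons]
    refine Finset.sum_congr rfl fun b0 _ => ?_
    rw [sum_cons]
    refine Finset.sum_congr rfl fun b1 _ => Finset.sum_congr rfl fun x _ => ?_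
    rw [show Fin.cons b0 (Fin.cons b1 x) = prepend2 (2*m) b0 b1 x from rfl, hdot]
  have e2 : ∀ b0 b1 (g : (Fin (2*m) → ZMod 2) → ZMod 2)
      (hg : ∀ x, f (prepend2 (2*m) b0 b1 x) = g x),
      (∑ x : Fin (2*m) → ZMod 2, ((-1:ℤ))^(f (prepend2 (2*m) b0 b1 x)
          + (((a 0)*b0 + (a 1)*b1) + dotp (2*m) a' x)).val)
        = ((-1:ℤ))^((a 0)*b0 + (a 1)*b1).val * walsh (2*m) g a' := by
    intro b0 b1 g hg
    rw [← walshInner_aux m g ((a 0)*b0 + (a 1)*b1) a']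
    exact Finset.sum_congr rfl fun x _ => by rw [hg]
  have e3 : walsh (2*(m+1)) f a
      = 2^m * (((-1:ℤ))^((a 0)*0+(a 1)*0).val * ((-1:ℤ))^(d₀ a').val
        + ((-1:ℤ))^((a 0)*0+(a 1)*1).val * ((-1:ℤ))^(d₁ a').val
        + ((-1:ℤ))^((a 0)*1+(a 1)*0).val * ((-1:ℤ))^(d₂ a').val
        + ((-1:ℤ))^((a 0)*1+(a 1)*1).val * ((-1:ℤ))^(d₃ a').val) := by
    rw [e1, sum_zmod2]
    rw [sum_zmod2 (fun b1 => _), sum_zmod2 (fun b1 => _)]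
    rw [e2 0 0 f₀ hf₀, e2 0 1 f₁ hf₁, e2 1 0 f₂ hf₂, e2 1 1 f₃ hf₃,
      hd₀ a', hd₁ a', hd₂ a', hd₃ a']
    ring
  rw [e3, abs_mul, abs_pow, abs_two, key (a 0) (a 1) _ _ _ _ (hsum a'), pow_succ]
end

section
/- Define τ_m : (ZMod 2)^{2m} → ZMod 2 recursively: τ_1(00)=0, τ_1(01)=0, τ_1(10)=1, τ_1(11)=0; and for m>1, τ_m(00⊙i)=τ_{m-1}(i), τ_m(01⊙i)=σ_{m-1}(i), τ_m(10⊙i)=σ_{m-1}(i)+1, τ_m(11⊙i)=τ_{m-1}(i), where σ_k(i) is the parity of the number of 01 bit-pairs in i. Then τ_m is a bent function for every m ≥ 1. -/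
/-- The sign-of-square function `σ_m` on bit strings: the parity of the number of
bit-pairs equal to `01`. -/
def sigma (m : ℕ) (i : Fin (2 * m) → ZMod 2) : ZMod 2 :=
  ∑ j : Fin m,
    if i ⟨2 * j.1, by have := j.2; omega⟩ = 0 ∧ i ⟨2 * j.1 + 1, by have := j.2; omega⟩ = 1
    then 1 else 0

/-- The tail of a bit string after removing its leading bit-pair. -/
def tail2 (m : ℕ) (i : Fin (2 * (m + 1)) → ZMod 2) (j : Fin (2 * m)) : ZMod 2 :=
  i ⟨j.1 + 2, by have := j.2; omega⟩

/-- The non-diagonal-symmetry function `τ_m`, defined recursively: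
`τ_m(00⊙i) = τ_{m-1}(i)`, `τ_m(01⊙i) = σ_{m-1}(i)`, `τ_m(10⊙i) = σ_{m-1}(i) + 1`,
`τ_m(11⊙i) = τ_{m-1}(i)`; in particular `τ_1(10) = 1` and `τ_1 = 0` otherwise. -/
def tau : (m : ℕ) → (Fin (2 * m) → ZMod 2) → ZMod 2
  | 0, _ => 0
  | m + 1, i =>
    if i ⟨0, by omega⟩ = 0 ∧ i ⟨1, by omega⟩ = 0 then tau m (tail2 m i)
    else if i ⟨0, by omega⟩ = 0 ∧ i ⟨1, by omega⟩ = 1 then sigma m (tail2 m i)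
    else if i ⟨0, by omega⟩ = 1 ∧ i ⟨1, by omega⟩ = 0 then sigma m (tail2 m i) + 1
    else tau m (tail2 m i)

/-- The character `(-1)^z` on `ZMod 2`. -/
def chi (z : ZMod 2) : ℤ := (-1) ^ z.val

/-- Prefixing two bits to a bit string. -/
def cc (m : ℕ) (b0 b1 : ZMod 2) (y : Fin (2*m) → ZMod 2) : Fin (2*(m+1)) → ZMod 2 :=
  Fin.cons b0 (Fin.cons b1 y)

lemma cc0 (m : ℕ) (b0 b1 : ZMod 2) (y : Fin (2*m) → ZMod 2) (h : 0 < 2*(m+1)) :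
    cc m b0 b1 y ⟨0, h⟩ = b0 := rfl

lemma cc1 (m : ℕ) (b0 b1 : ZMod 2) (y : Fin (2*m) → ZMod 2) (h : 1 < 2*(m+1)) :
    cc m b0 b1 y ⟨1, h⟩ = b1 := rfl

lemma cons_two_add (n : ℕ) (b0 b1 : ZMod 2) (y : Fin n → ZMod 2) (k : ℕ) (h : k + 2 < n + 1 + 1)
    (h' : k < n) :
    (Fin.cons b0 (Fin.cons b1 y) : Fin (n+1+1) → ZMod 2) ⟨k+2, h⟩ = y ⟨k, h'⟩ := by
  have : (⟨k+2, h⟩ : Fin (n+1+1)) = Fin.succ (Fin.succ ⟨k, h'⟩) := rfl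
  rw [this, Fin.cons_succ, Fin.cons_succ]

lemma cc_tail (m : ℕ) (b0 b1 : ZMod 2) (y : Fin (2*m) → ZMod 2) :
    tail2 m (cc m b0 b1 y) = y := by
  funext j
  exact cons_two_add (2*m) b0 b1 y j.1 (by have := j.2; omega) j.2

lemma split1 (n : ℕ) (F : (Fin (n+1) → ZMod 2) → ℤ) :
    ∑ x, F x = ∑ y : Fin n → ZMod 2, (F (Fin.cons 0 y) + F (Fin.cons 1 y)) := by
  rw [← (Fin.consEquiv (fun _ : Fin (n+1) => ZMod 2)).sum_comp, Fintype.sum_prod_type, sum_zmod2,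
    ← Finset.sum_add_distrib]
  rfl

lemma split_sum (m : ℕ) (F : (Fin (2*(m+1)) → ZMod 2) → ℤ) :
    ∑ x : Fin (2*(m+1)) → ZMod 2, F x
      = ∑ y : Fin (2*m) → ZMod 2,
          (F (cc m 0 0 y) + F (cc m 0 1 y) + F (cc m 1 0 y) + F (cc m 1 1 y)) := by
  show ∑ x : Fin (2*m+1+1) → ZMod 2, F x = _
  rw [split1 (2*m+1) F, split1 (2*m) (fun y => F (Fin.cons 0 y) + F (Fin.cons 1 y))]
  refine Finset.sum_congr rfl fun y _ => ?_
  show F (cc m 0 0 y) + F (cc m 1 0 y) + (F (cc m 0 1 y) + F (cc m 1 1 y)) = _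
  ring

lemma dotp_split (m : ℕ) (a x : Fin (2*(m+1)) → ZMod 2) :
    dotp (2*(m+1)) a x
      = a ⟨0, by omega⟩ * x ⟨0, by omega⟩ + a ⟨1, by omega⟩ * x ⟨1, by omega⟩
        + dotp (2*m) (tail2 m a) (tail2 m x) := by
  show ∑ j : Fin (2*m+1+1), a j * x j = _
  rw [Fin.sum_univ_succ, Fin.sum_univ_succ]
  have h : ∑ i : Fin (2*m), a i.succ.succ * x i.succ.succ
      = dotp (2*m) (tail2 m a) (tail2 m x) := Finset.sum_congr rfl fun j _ => rfl
  rw [h]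
  exact (add_assoc _ _ _).symm

lemma sigma_succ (m : ℕ) (i : Fin (2*(m+1)) → ZMod 2) :
    sigma (m+1) i
      = (if i ⟨0, by omega⟩ = 0 ∧ i ⟨1, by omega⟩ = 1 then 1 else 0) + sigma m (tail2 m i) := by
  unfold sigma
  rw [Fin.sum_univ_succ]
  congr 1

lemma sigma_cc (m : ℕ) (b0 b1 : ZMod 2) (y : Fin (2*m) → ZMod 2) :
    sigma (m+1) (cc m b0 b1 y) = (if b0 = 0 ∧ b1 = 1 then 1 else 0) + sigma m y := by
  rw [sigma_succ, cc0, cc1, cc_tail]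

lemma tau_cc (m : ℕ) (b0 b1 : ZMod 2) (y : Fin (2*m) → ZMod 2) :
    tau (m+1) (cc m b0 b1 y)
      = if b0 = 0 ∧ b1 = 0 then tau m y
        else if b0 = 0 ∧ b1 = 1 then sigma m y
        else if b0 = 1 ∧ b1 = 0 then sigma m y + 1
        else tau m y := by
  show (if cc m b0 b1 y ⟨0, by omega⟩ = 0 ∧ cc m b0 b1 y ⟨1, by omega⟩ = 0 then _ else _) = _
  rw [cc0, cc1, cc_tail]

lemma zmod2_cases (z : ZMod 2) : z = 0 ∨ z = 1 := by
  revert z; decide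

lemma base_case (f : (Fin (2*0) → ZMod 2) → ZMod 2) (hf : ∀ x, f x = 0)
    (a : Fin (2*0) → ZMod 2) :
    |∑ x : Fin (2*0) → ZMod 2, chi (f x + dotp (2*0) a x)| = 2 ^ 0 := by
  haveI : IsEmpty (Fin (2*0)) := ⟨fun j => absurd j.2 (by omega)⟩
  haveI : Unique (Fin (2*0) → ZMod 2) := Pi.uniqueOfIsEmpty _
  rw [Fintype.sum_unique]
  have hd : ∀ x, dotp (2*0) a x = 0 := fun x => by
    simp [dotp, Finset.univ_eq_empty]
  rw [hf, hd]
  decide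

lemma sigma_bent (m : ℕ) (a : Fin (2*m) → ZMod 2) :
    |∑ x : Fin (2*m) → ZMod 2, chi (sigma m x + dotp (2*m) a x)| = 2 ^ m := by
  induction m with
  | zero =>
      exact base_case _ (fun x => by simp [sigma]) a
  | succ m ih =>
      have key : ∀ y : Fin (2*m) → ZMod 2,
          chi (sigma (m+1) (cc m 0 0 y) + dotp (2*(m+1)) a (cc m 0 0 y))
          + chi (sigma (m+1) (cc m 0 1 y) + dotp (2*(m+1)) a (cc m 0 1 y))
          + chi (sigma (m+1) (cc m 1 0 y) + dotp (2*(m+1)) a (cc m 1 0 y))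
          + chi (sigma (m+1) (cc m 1 1 y) + dotp (2*(m+1)) a (cc m 1 1 y))
          = (if a ⟨0, by omega⟩ = 1 ∧ a ⟨1, by omega⟩ = 0 then -2 else 2)
            * chi (sigma m y + dotp (2*m) (tail2 m a) y) := by
        intro y
        simp only [sigma_cc, dotp_split, cc0, cc1, cc_tail]
        generalize a ⟨0, by omega⟩ = a0
        generalize a ⟨1, by omega⟩ = a1
        generalize sigma m y = s
        generalize dotp (2*m) (tail2 m a) y = d
        revert a0 a1 s d
        decide
      have h2 : ∑ x : Fin (2*(m+1)) → ZMod 2, chi (sigma (m+1) x + dotp (2*(m+1)) a x)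
          = (if a ⟨0, by omega⟩ = 1 ∧ a ⟨1, by omega⟩ = 0 then -2 else 2)
            * ∑ y : Fin (2*m) → ZMod 2, chi (sigma m y + dotp (2*m) (tail2 m a) y) := by
        rw [split_sum m (fun x => chi (sigma (m+1) x + dotp (2*(m+1)) a x)), Finset.mul_sum]
        exact Finset.sum_congr rfl fun y _ => key y
      rw [h2, abs_mul, ih (tail2 m a)]
      by_cases hc : a ⟨0, by omega⟩ = 1 ∧ a ⟨1, by omega⟩ = 0
      · rw [if_pos hc]; norm_num [pow_succ, mul_comm]
      · rw [if_neg hc]; norm_num [pow_succ, mul_comm]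

lemma tau_bent (m : ℕ) (a : Fin (2*m) → ZMod 2) :
    |∑ x : Fin (2*m) → ZMod 2, chi (tau m x + dotp (2*m) a x)| = 2 ^ m := by
  induction m with
  | zero =>
      exact base_case _ (fun x => rfl) a
  | succ m ih =>
      rcases zmod2_cases (a ⟨0, by omega⟩) with h0 | h0 <;>
        rcases zmod2_cases (a ⟨1, by omega⟩) with h1 | h1
      · have key : ∀ y : Fin (2*m) → ZMod 2,
            chi (tau (m+1) (cc m 0 0 y) + dotp (2*(m+1)) a (cc m 0 0 y))
            + chi (tau (m+1) (cc m 0 1 y) + dotp (2*(m+1)) a (cc m 0 1 y))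
            + chi (tau (m+1) (cc m 1 0 y) + dotp (2*(m+1)) a (cc m 1 0 y))
            + chi (tau (m+1) (cc m 1 1 y) + dotp (2*(m+1)) a (cc m 1 1 y))
            = (2 : ℤ) * chi (tau m y + dotp (2*m) (tail2 m a) y) := by
          intro y
          simp only [tau_cc, dotp_split, cc0, cc1, cc_tail, h0, h1]
          generalize tau m y = t
          generalize sigma m y = s
          generalize dotp (2*m) (tail2 m a) y = d
          revert t s d
          decide
        have h2 : ∑ x : Fin (2*(m+1)) → ZMod 2, chi (tau (m+1) x + dotp (2*(m+1)) a x)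
            = (2 : ℤ) * ∑ y : Fin (2*m) → ZMod 2, chi (tau m y + dotp (2*m) (tail2 m a) y) := by
          rw [split_sum m (fun x => chi (tau (m+1) x + dotp (2*(m+1)) a x)), Finset.mul_sum]
          exact Finset.sum_congr rfl fun y _ => key y
        rw [h2, abs_mul, ih (tail2 m a)]
        norm_num [pow_succ, mul_comm]
      · have key : ∀ y : Fin (2*m) → ZMod 2,
            chi (tau (m+1) (cc m 0 0 y) + dotp (2*(m+1)) a (cc m 0 0 y))
            + chi (tau (m+1) (cc m 0 1 y) + dotp (2*(m+1)) a (cc m 0 1 y))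
            + chi (tau (m+1) (cc m 1 0 y) + dotp (2*(m+1)) a (cc m 1 0 y))
            + chi (tau (m+1) (cc m 1 1 y) + dotp (2*(m+1)) a (cc m 1 1 y))
            = (-2 : ℤ) * chi (sigma m y + dotp (2*m) (tail2 m a) y) := by
          intro y
          simp only [tau_cc, dotp_split, cc0, cc1, cc_tail, h0, h1]
          generalize tau m y = t
          generalize sigma m y = s
          generalize dotp (2*m) (tail2 m a) y = d
          revert t s d
          decide
        have h2 : ∑ x : Fin (2*(m+1)) → ZMod 2, chi (tau (m+1) x + dotp (2*(m+1)) a x)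
            = (-2 : ℤ) * ∑ y : Fin (2*m) → ZMod 2, chi (sigma m y + dotp (2*m) (tail2 m a) y) := by
          rw [split_sum m (fun x => chi (tau (m+1) x + dotp (2*(m+1)) a x)), Finset.mul_sum]
          exact Finset.sum_congr rfl fun y _ => key y
        rw [h2, abs_mul, sigma_bent m (tail2 m a)]
        norm_num [pow_succ, mul_comm]
      · have key : ∀ y : Fin (2*m) → ZMod 2,
            chi (tau (m+1) (cc m 0 0 y) + dotp (2*(m+1)) a (cc m 0 0 y))
            + chi (tau (m+1) (cc m 0 1 y) + dotp (2*(m+1)) a (cc m 0 1 y))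
            + chi (tau (m+1) (cc m 1 0 y) + dotp (2*(m+1)) a (cc m 1 0 y))
            + chi (tau (m+1) (cc m 1 1 y) + dotp (2*(m+1)) a (cc m 1 1 y))
            = (2 : ℤ) * chi (sigma m y + dotp (2*m) (tail2 m a) y) := by
          intro y
          simp only [tau_cc, dotp_split, cc0, cc1, cc_tail, h0, h1]
          generalize tau m y = t
          generalize sigma m y = s
          generalize dotp (2*m) (tail2 m a) y = d
          revert t s d
          decide
        have h2 : ∑ x : Fin (2*(m+1)) → ZMod 2, chi (tau (m+1) x + dotp (2*(m+1)) a x)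
            = (2 : ℤ) * ∑ y : Fin (2*m) → ZMod 2, chi (sigma m y + dotp (2*m) (tail2 m a) y) := by
          rw [split_sum m (fun x => chi (tau (m+1) x + dotp (2*(m+1)) a x)), Finset.mul_sum]
          exact Finset.sum_congr rfl fun y _ => key y
        rw [h2, abs_mul, sigma_bent m (tail2 m a)]
        norm_num [pow_succ, mul_comm]
      · have key : ∀ y : Fin (2*m) → ZMod 2,
            chi (tau (m+1) (cc m 0 0 y) + dotp (2*(m+1)) a (cc m 0 0 y))
            + chi (tau (m+1) (cc m 0 1 y) + dotp (2*(m+1)) a (cc m 0 1 y))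
            + chi (tau (m+1) (cc m 1 0 y) + dotp (2*(m+1)) a (cc m 1 0 y))
            + chi (tau (m+1) (cc m 1 1 y) + dotp (2*(m+1)) a (cc m 1 1 y))
            = (2 : ℤ) * chi (tau m y + dotp (2*m) (tail2 m a) y) := by
          intro y
          simp only [tau_cc, dotp_split, cc0, cc1, cc_tail, h0, h1]
          generalize tau m y = t
          generalize sigma m y = s
          generalize dotp (2*m) (tail2 m a) y = d
          revert t s d
          decide
        have h2 : ∑ x : Fin (2*(m+1)) → ZMod 2, chi (tau (m+1) x + dotp (2*(m+1)) a x)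
            = (2 : ℤ) * ∑ y : Fin (2*m) → ZMod 2, chi (tau m y + dotp (2*m) (tail2 m a) y) := by
          rw [split_sum m (fun x => chi (tau (m+1) x + dotp (2*(m+1)) a x)), Finset.mul_sum]
          exact Finset.sum_congr rfl fun y _ => key y
        rw [h2, abs_mul, ih (tail2 m a)]
        norm_num [pow_succ, mul_comm]

/-- `τ_m` is a bent function on `(ZMod 2)^{2m}` for every `m ≥ 1`. -/
theorem tau_isBent (m : ℕ) (hm : 1 ≤ m) (a : Fin (2 * m) → ZMod 2) :
    |∑ x : Fin (2 * m) → ZMod 2, (-1 : ℤ) ^ (tau m x + dotp (2 * m) a x).val| = 2 ^ m := by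
  exact tau_bent m a
end

section
/- The cardinality of τ_m⁻¹(1) equals 2^{2m−1} − 2^{m−1}, where τ_m is defined recursively by τ_1(10)=1 and 0 otherwise, and τ_m(00⊙i)=τ_{m−1}(i), τ_m(01⊙i)=σ_{m−1}(i), τ_m(10⊙i)=σ_{m−1}(i)+1, τ_m(11⊙i)=τ_{m−1}(i). -/
/-- Prepend bits `a b` to a bit string. -/
def cons2 (m : ℕ) (a b : ZMod 2) (j : Fin (2 * m) → ZMod 2) : Fin (2 * (m + 1)) → ZMod 2 :=
  fun k => if h0 : k.1 = 0 then a else if h1 : k.1 = 1 then b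
    else j ⟨k.1 - 2, by have := k.2; omega⟩

lemma tail2_cons2 (m : ℕ) (a b : ZMod 2) (j : Fin (2 * m) → ZMod 2) :
    tail2 m (cons2 m a b j) = j := by
  funext k
  simp only [tail2, cons2]
  rw [dif_neg (by omega), dif_neg (by omega)]
  congr 1

lemma cons2_tail2 (m : ℕ) (i : Fin (2 * (m + 1)) → ZMod 2) :
    cons2 m (i ⟨0, by omega⟩) (i ⟨1, by omega⟩) (tail2 m i) = i := by
  funext k
  simp only [cons2, tail2]
  split_ifs with h0 h1
  · congr 1; exact (Fin.ext h0).symm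
  · congr 1; exact (Fin.ext h1).symm
  · congr 1; exact Fin.ext (show k.1 - 2 + 2 = k.1 by omega)

lemma tau_succ (n : ℕ) (i : Fin (2 * (n + 1)) → ZMod 2) :
    tau (n + 1) i =
    if i ⟨0, by omega⟩ = 0 ∧ i ⟨1, by omega⟩ = 0 then tau n (tail2 n i)
    else if i ⟨0, by omega⟩ = 0 ∧ i ⟨1, by omega⟩ = 1 then sigma n (tail2 n i)
    else if i ⟨0, by omega⟩ = 1 ∧ i ⟨1, by omega⟩ = 0 then sigma n (tail2 n i) + 1
    else tau n (tail2 n i) := rfl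

lemma tau_succ00 (n : ℕ) (i : Fin (2 * (n + 1)) → ZMod 2) (h0 : i ⟨0, by omega⟩ = 0)
    (h1 : i ⟨1, by omega⟩ = 0) : tau (n + 1) i = tau n (tail2 n i) := by
  rw [tau_succ, if_pos ⟨h0, h1⟩]

lemma tau_succ01 (n : ℕ) (i : Fin (2 * (n + 1)) → ZMod 2) (h0 : i ⟨0, by omega⟩ = 0)
    (h1 : i ⟨1, by omega⟩ = 1) : tau (n + 1) i = sigma n (tail2 n i) := by
  rw [tau_succ, if_neg (fun hc => by rw [h1] at hc; exact absurd hc.2 (by decide)),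
    if_pos ⟨h0, h1⟩]

lemma tau_succ10 (n : ℕ) (i : Fin (2 * (n + 1)) → ZMod 2) (h0 : i ⟨0, by omega⟩ = 1)
    (h1 : i ⟨1, by omega⟩ = 0) : tau (n + 1) i = sigma n (tail2 n i) + 1 := by
  rw [tau_succ, if_neg (fun hc => by rw [h0] at hc; exact absurd hc.1 (by decide)),
    if_neg (fun hc => by rw [h0] at hc; exact absurd hc.1 (by decide)), if_pos ⟨h0, h1⟩]

lemma tau_succ11 (n : ℕ) (i : Fin (2 * (n + 1)) → ZMod 2) (h0 : i ⟨0, by omega⟩ = 1)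
    (h1 : i ⟨1, by omega⟩ = 1) : tau (n + 1) i = tau n (tail2 n i) := by
  rw [tau_succ, if_neg (fun hc => by rw [h0] at hc; exact absurd hc.1 (by decide)),
    if_neg (fun hc => by rw [h0] at hc; exact absurd hc.1 (by decide)),
    if_neg (fun hc => by rw [h1] at hc; exact absurd hc.2 (by decide))]

lemma pos0 (n : ℕ) : (0:ℕ) < 2 * (n + 1) := by omega
lemma pos1 (n : ℕ) : (1:ℕ) < 2 * (n + 1) := by omega

lemma arith_step (n A B : ℕ) (hn : 1 ≤ n) (h : A + B = 2 ^ (2 * n)) :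
    2 ^ (2 * n - 1) - 2 ^ (n - 1) + A + B + (2 ^ (2 * n - 1) - 2 ^ (n - 1))
      = 2 ^ (2 * (n + 1) - 1) - 2 ^ (n + 1 - 1) := by
  have e1 : 2 * (n + 1) - 1 = 2 * n + 1 := by omega
  have e2 : n + 1 - 1 = n := by omega
  rw [e1, e2]
  have p1 : 2 ^ (2 * n + 1) = 2 ^ (2 * n) * 2 := by ring
  have p2 : 2 ^ (2 * n) = 2 ^ (2 * n - 1) * 2 := by
    rw [← pow_succ]; congr 1; omega
  have p3 : 2 ^ n = 2 ^ (n - 1) * 2 := by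
    rw [← pow_succ]; congr 1; omega
  have p4 : 2 ^ (n - 1) ≤ 2 ^ (2 * n - 1) := Nat.pow_le_pow_right (by norm_num) (by omega)
  omega

lemma head_card (m : ℕ) (a b : ZMod 2) (Q : (Fin (2 * m) → ZMod 2) → Prop) [DecidablePred Q] :
    (Finset.univ.filter (fun i : Fin (2 * (m + 1)) → ZMod 2 =>
      (i ⟨0, by omega⟩ = a ∧ i ⟨1, by omega⟩ = b) ∧ Q (tail2 m i))).card
    = (Finset.univ.filter Q).card := by
  apply Finset.card_nbij' (tail2 m) (cons2 m a b)
  · intro i hi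
    simp only [Finset.mem_coe, Finset.mem_filter, Finset.mem_univ, true_and] at hi ⊢
    exact hi.2
  · intro j hj
    simp only [Finset.mem_coe, Finset.mem_filter, Finset.mem_univ, true_and] at hj ⊢
    refine ⟨⟨rfl, rfl⟩, ?_⟩
    rwa [tail2_cons2]
  · intro i hi
    simp only [Finset.mem_coe, Finset.mem_filter, Finset.mem_univ, true_and] at hi
    rw [← hi.1.1, ← hi.1.2, cons2_tail2]
  · intro j _
    exact tail2_cons2 m a b j

lemma zmod2_ne_zero (x : ZMod 2) : ¬ x = 0 ↔ x = 1 := by revert x; decide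

lemma split_card (m : ℕ) (P : (Fin (2 * (m + 1)) → ZMod 2) → Prop) [DecidablePred P] :
    (Finset.univ.filter P).card
    = (Finset.univ.filter (fun i => (i ⟨0, by omega⟩ = (0:ZMod 2) ∧ i ⟨1, by omega⟩ = 0) ∧ P i)).card
    + (Finset.univ.filter (fun i => (i ⟨0, by omega⟩ = (0:ZMod 2) ∧ i ⟨1, by omega⟩ = 1) ∧ P i)).card
    + (Finset.univ.filter (fun i => (i ⟨0, by omega⟩ = (1:ZMod 2) ∧ i ⟨1, by omega⟩ = 0) ∧ P i)).card
    + (Finset.univ.filter (fun i => (i ⟨0, by omega⟩ = (1:ZMod 2) ∧ i ⟨1, by omega⟩ = 1) ∧ P i)).card := by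
  classical
  have key : ∀ s : Finset (Fin (2 * (m + 1)) → ZMod 2), ∀ f : (Fin (2 * (m + 1)) → ZMod 2) → ZMod 2,
      s.card = (s.filter (fun i => f i = 0)).card + (s.filter (fun i => f i = 1)).card := by
    intro s f
    rw [← Finset.card_filter_add_card_filter_not (p := fun i => f i = 0)]
    congr 1
    apply Finset.card_bij (fun i _ => i) <;> simp [zmod2_ne_zero]
  rw [key _ (fun i => i ⟨0, by omega⟩)]
  rw [key (Finset.univ.filter P |>.filter _) (fun i => i ⟨1, by omega⟩),
      key ((Finset.univ.filter P).filter (fun i => i ⟨0, by omega⟩ = 1)) (fun i => i ⟨1, by omega⟩)]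
  simp only [Finset.filter_filter]
  have : ∀ (a b : ZMod 2),
      (Finset.univ.filter (fun i : Fin (2 * (m + 1)) → ZMod 2 => (P i ∧ i ⟨0, by omega⟩ = a) ∧ i ⟨1, by omega⟩ = b))
      = Finset.univ.filter (fun i => (i ⟨0, by omega⟩ = a ∧ i ⟨1, by omega⟩ = b) ∧ P i) := by
    intro a b
    apply Finset.filter_congr
    intro i _
    tauto
  rw [this 0 0, this 0 1, this 1 0, this 1 1]
  ring

/-- The cardinality of `τ_m⁻¹(1)` is `2^{2m-1} - 2^{m-1}`. -/
theorem card_tau_preimage_one (m : ℕ) (hm : 1 ≤ m) :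
    (Finset.univ.filter (fun i : Fin (2 * m) → ZMod 2 => tau m i = 1)).card
      = 2 ^ (2 * m - 1) - 2 ^ (m - 1) := by
  induction m, hm using Nat.le_induction with
  | base => decide
  | succ n hn ih =>
    rw [split_card n (fun i => tau (n + 1) i = 1)]
    have h00 : (Finset.univ.filter (fun i : Fin (2 * (n + 1)) → ZMod 2 =>
        (i ⟨0, pos0 n⟩ = (0:ZMod 2) ∧ i ⟨1, pos1 n⟩ = 0) ∧ tau (n + 1) i = 1)).card
        = (Finset.univ.filter (fun j : Fin (2 * n) → ZMod 2 => tau n j = 1)).card := by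
      rw [← head_card n 0 0 (fun j => tau n j = 1)]
      congr 1
      apply Finset.filter_congr
      intro i _
      constructor
      · rintro ⟨⟨h0, h1⟩, ht⟩
        exact ⟨⟨h0, h1⟩, by rw [← tau_succ00 n i h0 h1]; exact ht⟩
      · rintro ⟨⟨h0, h1⟩, ht⟩
        exact ⟨⟨h0, h1⟩, by rw [tau_succ00 n i h0 h1]; exact ht⟩
    have h01 : (Finset.univ.filter (fun i : Fin (2 * (n + 1)) → ZMod 2 =>
        (i ⟨0, pos0 n⟩ = (0:ZMod 2) ∧ i ⟨1, pos1 n⟩ = 1) ∧ tau (n + 1) i = 1)).card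
        = (Finset.univ.filter (fun j : Fin (2 * n) → ZMod 2 => sigma n j = 1)).card := by
      rw [← head_card n 0 1 (fun j => sigma n j = 1)]
      congr 1
      apply Finset.filter_congr
      intro i _
      constructor
      · rintro ⟨⟨h0, h1⟩, ht⟩
        exact ⟨⟨h0, h1⟩, by rw [← tau_succ01 n i h0 h1]; exact ht⟩
      · rintro ⟨⟨h0, h1⟩, ht⟩
        exact ⟨⟨h0, h1⟩, by rw [tau_succ01 n i h0 h1]; exact ht⟩
    have h10 : (Finset.univ.filter (fun i : Fin (2 * (n + 1)) → ZMod 2 =>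
        (i ⟨0, pos0 n⟩ = (1:ZMod 2) ∧ i ⟨1, pos1 n⟩ = 0) ∧ tau (n + 1) i = 1)).card
        = (Finset.univ.filter (fun j : Fin (2 * n) → ZMod 2 => sigma n j + 1 = 1)).card := by
      rw [← head_card n 1 0 (fun j => sigma n j + 1 = 1)]
      congr 1
      apply Finset.filter_congr
      intro i _
      constructor
      · rintro ⟨⟨h0, h1⟩, ht⟩
        exact ⟨⟨h0, h1⟩, by rw [← tau_succ10 n i h0 h1]; exact ht⟩
      · rintro ⟨⟨h0, h1⟩, ht⟩
        exact ⟨⟨h0, h1⟩, by rw [tau_succ10 n i h0 h1]; exact ht⟩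
    have h11 : (Finset.univ.filter (fun i : Fin (2 * (n + 1)) → ZMod 2 =>
        (i ⟨0, pos0 n⟩ = (1:ZMod 2) ∧ i ⟨1, pos1 n⟩ = 1) ∧ tau (n + 1) i = 1)).card
        = (Finset.univ.filter (fun j : Fin (2 * n) → ZMod 2 => tau n j = 1)).card := by
      rw [← head_card n 1 1 (fun j => tau n j = 1)]
      congr 1
      apply Finset.filter_congr
      intro i _
      constructor
      · rintro ⟨⟨h0, h1⟩, ht⟩
        exact ⟨⟨h0, h1⟩, by rw [← tau_succ11 n i h0 h1]; exact ht⟩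
      · rintro ⟨⟨h0, h1⟩, ht⟩
        exact ⟨⟨h0, h1⟩, by rw [tau_succ11 n i h0 h1]; exact ht⟩
    rw [h00, h01, h10, h11, ih]
    -- σ counting: the two σ-sets partition everything
    have hσ : (Finset.univ.filter (fun j : Fin (2 * n) → ZMod 2 => sigma n j = 1)).card
        + (Finset.univ.filter (fun j : Fin (2 * n) → ZMod 2 => sigma n j + 1 = 1)).card
        = 2 ^ (2 * n) := by
      have h1 : (Finset.univ.filter (fun j : Fin (2 * n) → ZMod 2 => sigma n j + 1 = 1))
          = Finset.univ.filter (fun j : Fin (2 * n) → ZMod 2 => ¬ sigma n j = 1) := by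
        apply Finset.filter_congr
        intro j _
        have : ∀ x : ZMod 2, (x + 1 = 1 ↔ ¬ x = 1) := by decide
        simpa using this (sigma n j)
      rw [h1, Finset.card_filter_add_card_filter_not, Finset.card_univ]
      simp [Fintype.card_fun]
    exact arith_step n _ _ hn hσ
end

section
/- If f : (ZMod 2)^n → ZMod 2 (n even) is a bent function, then its Cayley graph — the graph on vertex set (ZMod 2)^n with x adjacent to y iff f(x+y) = 1, assuming f(0) = 0 — is strongly regular with λ = μ. -/
/-- The Cayley graph of a Boolean function `f` with `f 0 = 0`:
vertices `x ≠ y` are adjacent iff `f (x + y) = 1`. -/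
def cayley (n : ℕ) (f : (Fin n → ZMod 2) → ZMod 2) : SimpleGraph (Fin n → ZMod 2) where
  Adj x y := x ≠ y ∧ f (x + y) = 1
  symm := by constructor; intro x y h; exact ⟨h.1.symm, by rw [add_comm]; exact h.2⟩
  loopless := by constructor; intro x h; exact h.1 rfl

instance (n : ℕ) (f : (Fin n → ZMod 2) → ZMod 2) : DecidableRel (cayley n f).Adj :=
  fun _ _ => instDecidableAnd

namespace BentSRG

def chi (u : ZMod 2) : ℤ := (-1) ^ u.val

lemma chi_add : ∀ u v : ZMod 2, chi (u + v) = chi u * chi v := by decide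

lemma chi_neone : ∀ u : ZMod 2, chi (u + 1) = - chi u := by decide

lemma nz_one : ∀ u : ZMod 2, u ≠ 0 → u = 1 := by decide

lemma val_boole : ∀ u : ZMod 2, (u.val : ℤ) = if u = 1 then 1 else 0 := by decide

lemma prod_boole : ∀ u v : ZMod 2,
    (u.val:ℤ) * (v.val:ℤ) = if u = 1 ∧ v = 1 then 1 else 0 := by decide

lemma chichi_expand : ∀ u v : ZMod 2,
    chi u * chi v = 1 - 2*(u.val:ℤ) - 2*(v.val:ℤ) + 4*((u.val:ℤ)*(v.val:ℤ)) := by decide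

lemma z1 : ∀ a b c : ZMod 2, a + b + c = 0 → b = a + c := by decide
lemma z2 : ∀ a c : ZMod 2, a + (a + c) + c = 0 := by decide
lemma z3 : ∀ a b : ZMod 2, a + (a + b) = b := by decide
lemma z4 : ∀ a b c : ZMod 2, (a + b) + (a + c) = b + c := by decide
lemma z5 : ∀ a b : ZMod 2, a + b = 0 → a = b := by decide

lemma cardV (n : ℕ) : Fintype.card (Fin n → ZMod 2) = 2 ^ n := by
  simp

lemma dotp_add_left (n : ℕ) (a b x : Fin n → ZMod 2) :
    dotp n (a + b) x = dotp n a x + dotp n b x := by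
  simp [dotp, add_mul, Finset.sum_add_distrib]

lemma dotp_add_right (n : ℕ) (a x y : Fin n → ZMod 2) :
    dotp n a (x + y) = dotp n a x + dotp n a y := by
  simp [dotp, mul_add, Finset.sum_add_distrib]

lemma dotp_single (n : ℕ) (j : Fin n) (d : Fin n → ZMod 2) :
    dotp n (Pi.single j 1) d = d j := by
  rw [dotp, Finset.sum_eq_single j]
  · simp
  · intro b _ hb; simp [Pi.single_eq_of_ne hb]
  · simp

lemma reindex_add {n : ℕ} (s : Fin n → ZMod 2) (g : (Fin n → ZMod 2) → ℤ) :
    ∑ a : Fin n → ZMod 2, g (a + s) = ∑ a : Fin n → ZMod 2, g a :=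
  Fintype.sum_equiv (Equiv.addRight s) _ _ (fun _ => rfl)

lemma orth_full (n : ℕ) (d : Fin n → ZMod 2) :
    ∑ a : Fin n → ZMod 2, chi (dotp n a d) = if d = 0 then 2^n else 0 := by
  split_ifs with hd
  · subst hd
    have h0 : ∀ a : Fin n → ZMod 2, dotp n a 0 = 0 := by intro a; simp [dotp]
    simp only [h0]
    simp [chi]
  · obtain ⟨j, hj⟩ : ∃ j, d j ≠ 0 := by
      by_contra h; push_neg at h; exact hd (funext fun j => h j)
    have hj1 : d j = 1 := nz_one _ hj
    have key : ∀ a : Fin n → ZMod 2,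
        chi (dotp n (a + Pi.single j 1) d) = - chi (dotp n a d) := by
      intro a
      rw [dotp_add_left, dotp_single, hj1, chi_neone]
    have h := reindex_add (Pi.single j 1) (fun a => chi (dotp n a d))
    simp only [key] at h
    rw [Finset.sum_neg_distrib] at h
    linarith

lemma autocorr (n : ℕ) (hn : Even n) (f : (Fin n → ZMod 2) → ZMod 2)
    (hbent : ∀ a, |∑ x : Fin n → ZMod 2, (-1 : ℤ) ^ (f x + dotp n a x).val| = 2 ^ (n / 2))
    (d : Fin n → ZMod 2) (hd : d ≠ 0) :
    ∑ x : Fin n → ZMod 2, chi (f x) * chi (f (x + d)) = 0 := by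
  set F : (Fin n → ZMod 2) → ℤ := fun a => ∑ x : Fin n → ZMod 2, chi (f x + dotp n a x)
    with hF
  have hFsq : ∀ a, (F a)^2 = 2^n := by
    intro a
    have h1 : |F a| = 2 ^ (n/2) := hbent a
    calc (F a)^2 = |F a|^2 := (sq_abs _).symm
    _ = (2:ℤ)^(n/2*2) := by rw [h1, ← pow_mul]
    _ = 2^n := by rw [Nat.div_mul_cancel hn.two_dvd]
  set S : ℤ := ∑ a : Fin n → ZMod 2, chi (dotp n a d) * (F a)^2 with hS
  have hS0 : S = 0 := by
    rw [hS]
    simp only [hFsq]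
    rw [← Finset.sum_mul, orth_full, if_neg hd, zero_mul]
  have hexp : S = ∑ x : Fin n → ZMod 2, chi (f x) * chi (f (x + d)) * 2^n := by
    rw [hS]
    have step1 : ∀ a, chi (dotp n a d) * (F a)^2
        = ∑ x : Fin n → ZMod 2, ∑ y : Fin n → ZMod 2,
            chi (f x) * chi (f y) * chi (dotp n a (x + y + d)) := by
      intro a
      rw [sq, hF, Finset.sum_mul_sum, Finset.mul_sum]
      refine Finset.sum_congr rfl fun x _ => ?_
      rw [Finset.mul_sum]
      refine Finset.sum_congr rfl fun y _ => ?_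
      rw [chi_add, chi_add, dotp_add_right, dotp_add_right, chi_add, chi_add]
      ring
    simp only [step1]
    rw [Finset.sum_comm]
    refine Finset.sum_congr rfl fun x _ => ?_
    rw [Finset.sum_comm]
    calc ∑ y : Fin n → ZMod 2, ∑ a : Fin n → ZMod 2,
            chi (f x) * chi (f y) * chi (dotp n a (x + y + d))
        = ∑ y : Fin n → ZMod 2,
            chi (f x) * chi (f y) * (if x + y + d = 0 then (2:ℤ)^n else 0) := by
          refine Finset.sum_congr rfl fun y _ => ?_
          rw [← Finset.mul_sum, orth_full]
      _ = chi (f x) * chi (f (x + d)) * 2^n := by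
          rw [Finset.sum_eq_single (x + d)]
          · have h0 : x + (x + d) + d = 0 := funext fun j => z2 (x j) (d j)
            rw [if_pos h0]
          · intro y _ hy
            rw [if_neg, mul_zero]
            intro h0
            exact hy (funext fun j => z1 (x j) (y j) (d j) (congrFun h0 j))
          · intro h; exact absurd (Finset.mem_univ _) h
  rw [hS0] at hexp
  rw [← Finset.sum_mul] at hexp
  have := (mul_eq_zero.mp hexp.symm).resolve_right (by positivity)
  linarith [this]

/-- Number of ones of `f`. -/
def Ac (n : ℕ) (f : (Fin n → ZMod 2) → ZMod 2) : ℕ :=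
  (Finset.univ.filter fun z : Fin n → ZMod 2 => f z = 1).card

/-- Autocorrelation count. -/
def Nc (n : ℕ) (f : (Fin n → ZMod 2) → ZMod 2) (d : Fin n → ZMod 2) : ℕ :=
  (Finset.univ.filter fun w : Fin n → ZMod 2 => f w = 1 ∧ f (w + d) = 1).card

lemma count (n : ℕ) (hn : Even n) (f : (Fin n → ZMod 2) → ZMod 2)
    (hbent : ∀ a, |∑ x : Fin n → ZMod 2, (-1 : ℤ) ^ (f x + dotp n a x).val| = 2 ^ (n / 2))
    (d : Fin n → ZMod 2) (hd : d ≠ 0) :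
    4 * (Nc n f d : ℤ) = 4 * (Ac n f : ℤ) - 2^n := by
  have h := autocorr n hn f hbent d hd
  have e1 : ∑ w : Fin n → ZMod 2, ((f w).val : ℤ) = (Ac n f : ℤ) := by
    simp only [val_boole]
    rw [Finset.sum_boole, Ac]
  have e2 : ∑ w : Fin n → ZMod 2, ((f (w + d)).val : ℤ) = (Ac n f : ℤ) := by
    rw [reindex_add d (fun w => ((f w).val : ℤ))]; exact e1
  have e3 : ∑ w : Fin n → ZMod 2, ((f w).val : ℤ) * ((f (w + d)).val : ℤ)
      = (Nc n f d : ℤ) := by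
    simp only [prod_boole]
    rw [Finset.sum_boole, Nc]
  simp only [chichi_expand] at h
  rw [Finset.sum_add_distrib, Finset.sum_sub_distrib, Finset.sum_sub_distrib,
      Finset.sum_const, ← Finset.mul_sum, ← Finset.mul_sum, ← Finset.mul_sum,
      e1, e2, e3, Finset.card_univ, cardV] at h
  simp only [nsmul_eq_mul, mul_one] at h
  push_cast at h ⊢
  linarith

lemma deg (n : ℕ) (f : (Fin n → ZMod 2) → ZMod 2) (hf0 : f 0 = 0)
    (x : Fin n → ZMod 2) : (cayley n f).degree x = Ac n f := by
  rw [SimpleGraph.degree]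
  have himg : (cayley n f).neighborFinset x
      = (Finset.univ.filter fun z : Fin n → ZMod 2 => f z = 1).image (fun z => x + z) := by
    ext y
    simp only [SimpleGraph.mem_neighborFinset, Finset.mem_image, Finset.mem_filter,
      Finset.mem_univ, true_and]
    constructor
    · rintro ⟨hne, hfy⟩
      exact ⟨x + y, hfy, funext fun j => z3 (x j) (y j)⟩
    · rintro ⟨z, hz, rfl⟩
      refine ⟨?_, ?_⟩
      · intro hxy
        have hz0 : z = 0 := by
          have := hxy
          nth_rewrite 1 [← add_zero x] at this
          exact (add_left_cancel this).symm
        rw [hz0, hf0] at hz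
        exact one_ne_zero hz.symm
      · have : x + (x + z) = z := funext fun j => z3 (x j) (z j)
        rw [this]; exact hz
  rw [himg, Finset.card_image_of_injective _ (add_right_injective x), Ac]

lemma common (n : ℕ) (f : (Fin n → ZMod 2) → ZMod 2) (hf0 : f 0 = 0)
    (x y : Fin n → ZMod 2) :
    Fintype.card ((cayley n f).commonNeighbors x y) = Nc n f (x + y) := by
  rw [← Set.toFinset_card]
  have himg : ((cayley n f).commonNeighbors x y).toFinset
      = (Finset.univ.filter fun w : Fin n → ZMod 2 => f w = 1 ∧ f (w + (x + y)) = 1).image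
          (fun w => x + w) := by
    ext z
    simp only [Set.mem_toFinset, SimpleGraph.mem_commonNeighbors, Finset.mem_image,
      Finset.mem_filter, Finset.mem_univ, true_and]
    constructor
    · rintro ⟨⟨hxz, hfxz⟩, ⟨hyz, hfyz⟩⟩
      refine ⟨x + z, ⟨hfxz, ?_⟩, funext fun j => z3 (x j) (z j)⟩
      have : (x + z) + (x + y) = z + y := funext fun j => z4 (x j) (z j) (y j)
      rw [this, add_comm]; exact hfyz
    · rintro ⟨w, ⟨hw1, hw2⟩, rfl⟩
      have hxw : x + (x + w) = w := funext fun j => z3 (x j) (w j)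
      have hyw : y + (x + w) = w + (x + y) := by
        funext j
        simp only [Pi.add_apply]
        have : ∀ a b c : ZMod 2, a + (b + c) = c + (b + a) := by decide
        exact this (y j) (x j) (w j)
      refine ⟨⟨?_, by rw [hxw]; exact hw1⟩, ⟨?_, by rw [hyw]; exact hw2⟩⟩
      · intro hx
        have : f (x + (x + w)) = 1 := by rw [hxw]; exact hw1
        rw [← hx, show x + x = 0 from funext fun j => CharTwo.add_self_eq_zero (x j),
          hf0] at this
        exact one_ne_zero this.symm
      · intro hy
        have : f (y + (x + w)) = 1 := by rw [hyw]; exact hw2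
        rw [← hy, show y + y = 0 from funext fun j => CharTwo.add_self_eq_zero (y j),
          hf0] at this
        exact one_ne_zero this.symm
  rw [himg, Finset.card_image_of_injective _ (add_right_injective x), Nc]

end BentSRG

open BentSRG in
/-- The Cayley graph of a bent function is strongly regular with `λ = μ`. -/
theorem cayley_bent_isSRG (n : ℕ) (hn : Even n)
    (f : (Fin n → ZMod 2) → ZMod 2) (hf0 : f 0 = 0)
    (hbent : ∀ a, |∑ x : Fin n → ZMod 2, (-1 : ℤ) ^ (f x + dotp n a x).val| = 2 ^ (n / 2)) :
    ∃ k l : ℕ, (cayley n f).IsSRGWith (2 ^ n) k l l := by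
  refine ⟨Ac n f, Nc n f (fun _ => (1 : ZMod 2)), ?_⟩
  have hconst : ∀ d : Fin n → ZMod 2, d ≠ 0 →
      Nc n f d = Nc n f (fun _ => (1 : ZMod 2)) := by
    intro d hd
    have hn0 : n ≠ 0 := by
      rintro rfl
      exact hd (funext fun j => j.elim0)
    have h1 : (fun _ => (1 : ZMod 2)) ≠ (0 : Fin n → ZMod 2) := by
      intro h0
      have := congrFun h0 ⟨0, Nat.pos_of_ne_zero hn0⟩
      simp at this
    have c1 := count n hn f hbent d hd
    have c2 := count n hn f hbent _ h1
    have : (Nc n f d : ℤ) = (Nc n f (fun _ => (1 : ZMod 2)) : ℤ) := by linarith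
    exact_mod_cast this
  constructor
  · exact cardV n
  · intro x; exact deg n f hf0 x
  · intro v w hadj
    have hne : v ≠ w := hadj.1
    have hvw : v + w ≠ 0 := fun h0 => hne (funext fun j => z5 (v j) (w j) (congrFun h0 j))
    rw [common n f hf0 v w, hconst _ hvw]
  · intro v w hne _
    have hvw : v + w ≠ 0 := fun h0 => hne (funext fun j => z5 (v j) (w j) (congrFun h0 j))
    rw [common n f hf0 v w, hconst _ hvw]
end
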